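/- The Cyclic hash family is never pairwise independent: for n = 3 and distinct symbols a, b, P(h(aab) = h(aba)) ≥ 1/2^{L-1} > 1/2^L. -/

import Mathlib

open MeasureTheory Polynomial
open scoped ENNReal

section Aux
open AdjoinRoot

lemma stmt4_monic (L : ℕ) (hL : 1 ≤ L) : ((X : Polynomial (ZMod 2)) ^ L + 1).Monic := by
  apply monic_X_pow_add
  calc degree (1 : Polynomial (ZMod 2)) ≤ 0 := degree_one_le
  _ < L := by exact_mod_cast Nat.cast_pos.mpr hL

lemma stmt4_natDegree (L : ℕ) : ((X : Polynomial (ZMod 2)) ^ L + 1).natDegree = L := by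
  have : ((X : Polynomial (ZMod 2)) ^ L + 1) = X ^ L + C 1 := by simp
  rw [this, natDegree_X_pow_add_C]

lemma stmt4_finite (L : ℕ) (hL : 1 ≤ L) :
    Finite (AdjoinRoot ((X : Polynomial (ZMod 2)) ^ L + 1)) := by
  have pb := AdjoinRoot.powerBasis' (stmt4_monic L hL)
  exact Finite.of_equiv _ pb.basis.equivFun.toEquiv.symm

lemma stmt4_char (L : ℕ) :
    (1 : AdjoinRoot ((X : Polynomial (ZMod 2)) ^ L + 1)) + 1 = 0 := by
  have h : ((1 : ZMod 2) + 1) = 0 := by decide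
  calc (1 : AdjoinRoot ((X : Polynomial (ZMod 2)) ^ L + 1)) + 1
      = algebraMap (ZMod 2) _ (1 + 1) := by simp
  _ = 0 := by rw [h, map_zero]

lemma stmt4_root_pow (L : ℕ) :
    (root ((X : Polynomial (ZMod 2)) ^ L + 1)) ^ L = 1 := by
  have h0 : (root ((X : Polynomial (ZMod 2)) ^ L + 1)) ^ L + 1 = 0 := by
    have h := AdjoinRoot.mk_self (f := (X : Polynomial (ZMod 2)) ^ L + 1)
    rwa [map_add, map_pow, mk_X, map_one] at h
  have h1 : (root ((X : Polynomial (ZMod 2)) ^ L + 1)) ^ L = -1 :=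
    eq_neg_of_add_eq_zero_left h0
  rw [h1, neg_eq_of_add_eq_zero_left (stmt4_char L)]

lemma stmt4_g_mul_root (L : ℕ) :
    (∑ i ∈ Finset.range L, (root ((X : Polynomial (ZMod 2)) ^ L + 1)) ^ i)
      * root ((X : Polynomial (ZMod 2)) ^ L + 1)
    = ∑ i ∈ Finset.range L, (root ((X : Polynomial (ZMod 2)) ^ L + 1)) ^ i := by
  have h := geom_sum_mul (root ((X : Polynomial (ZMod 2)) ^ L + 1)) L
  rw [stmt4_root_pow L, sub_self] at h
  have h2 : (∑ i ∈ Finset.range L, (root ((X : Polynomial (ZMod 2)) ^ L + 1)) ^ i)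
      * root ((X : Polynomial (ZMod 2)) ^ L + 1)
      - (∑ i ∈ Finset.range L, (root ((X : Polynomial (ZMod 2)) ^ L + 1)) ^ i) = 0 := by
    rw [← h]; ring
  exact sub_eq_zero.mp h2

lemma stmt4_g_ne_zero (L : ℕ) (hL : 1 ≤ L) :
    (∑ i ∈ Finset.range L, (root ((X : Polynomial (ZMod 2)) ^ L + 1)) ^ i) ≠ 0 := by
  have hg : (∑ i ∈ Finset.range L, (root ((X : Polynomial (ZMod 2)) ^ L + 1)) ^ i)
      = AdjoinRoot.mk ((X : Polynomial (ZMod 2)) ^ L + 1)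
          (∑ i ∈ Finset.range L, (X : Polynomial (ZMod 2)) ^ i) := by
    simp [map_sum, map_pow, mk_X]
  rw [hg]
  apply mk_ne_zero_of_natDegree_lt (stmt4_monic L hL)
  · intro h
    have h0 : (∑ i ∈ Finset.range L, (X : Polynomial (ZMod 2)) ^ i).coeff 0 = 1 := by
      rw [finset_sum_coeff]
      rw [Finset.sum_eq_single 0]
      · simp
      · intro i hi hne; simp [coeff_X_pow, hne.symm]
      · intro h0; exact absurd (Finset.mem_range.mpr hL) h0
    rw [h] at h0
    simp at h0
  · rw [stmt4_natDegree]
    refine lt_of_le_of_lt ?_ (show L - 1 < L by omega)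
    exact natDegree_sum_le_of_forall_le (Finset.range L) _
      (fun i hi => by simpa using Nat.le_sub_one_of_lt (Finset.mem_range.mp hi))

end Aux

/-- The Cyclic hash family is never pairwise independent: for `n = 3` and distinct symbols
`a, b`, `P(h(aab) = h(aba)) ≥ 1/2^{L-1} > 1/2^L`. -/
theorem stmt_4
    {Ω : Type*} [MeasurableSpace Ω] (μ : Measure Ω) [IsProbabilityMeasure μ]
    {A : Type*} (L : ℕ) (hL : 3 ≤ L)
    (h₁ : Ω → A → AdjoinRoot ((X : Polynomial (ZMod 2)) ^ L + 1))
    (hmeas : ∀ (c : A) (r : AdjoinRoot ((X : Polynomial (ZMod 2)) ^ L + 1)),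
      MeasurableSet {ω | h₁ ω c = r})
    (hunif : ∀ (c : A) (r : AdjoinRoot ((X : Polynomial (ZMod 2)) ^ L + 1)),
      μ {ω | h₁ ω c = r} = 1 / 2 ^ L)
    (hind : ProbabilityTheory.iIndepFun
      (m := fun _ : A => (⊤ : MeasurableSpace (AdjoinRoot ((X : Polynomial (ZMod 2)) ^ L + 1))))
      (fun c ω => h₁ ω c) μ)
    (a b : A) (hab : a ≠ b) :
    1 / 2 ^ (L - 1) ≤
        μ {ω |
          h₁ ω a * (AdjoinRoot.root ((X : Polynomial (ZMod 2)) ^ L + 1)) ^ 2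
              + h₁ ω a * AdjoinRoot.root ((X : Polynomial (ZMod 2)) ^ L + 1) + h₁ ω b
            = h₁ ω a * (AdjoinRoot.root ((X : Polynomial (ZMod 2)) ^ L + 1)) ^ 2
              + h₁ ω b * AdjoinRoot.root ((X : Polynomial (ZMod 2)) ^ L + 1) + h₁ ω a}
      ∧ (1 : ℝ≥0∞) / 2 ^ L < 1 / 2 ^ (L - 1) := by
  haveI : Finite (AdjoinRoot ((X : Polynomial (ZMod 2)) ^ L + 1)) :=
    stmt4_finite L (by omega)
  letI : MeasurableSpace (AdjoinRoot ((X : Polynomial (ZMod 2)) ^ L + 1)) := ⊤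
  set x := AdjoinRoot.root ((X : Polynomial (ZMod 2)) ^ L + 1) with hx
  set g := ∑ i ∈ Finset.range L, x ^ i with hgdef
  have hgx : g * x = g := stmt4_g_mul_root L
  have hgne : g ≠ 0 := stmt4_g_ne_zero L (by omega)
  have hXY : ProbabilityTheory.IndepFun (fun ω => h₁ ω a) (fun ω => h₁ ω b) μ :=
    hind.indepFun hab
  -- key computation
  have key : ∀ c : AdjoinRoot ((X : Polynomial (ZMod 2)) ^ L + 1),
      μ (⋃ r, {ω | h₁ ω a = r + c} ∩ {ω | h₁ ω b = r}) = 1 / 2 ^ L := by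
    intro c
    have hdisj : Pairwise (Function.onFun Disjoint
        fun r => {ω | h₁ ω a = r + c} ∩ {ω | h₁ ω b = r}) := by
      intro r s hrs
      rw [Function.onFun, Set.disjoint_left]
      rintro ω ⟨_, h1⟩ ⟨_, h2⟩
      exact hrs (h1.symm.trans h2)
    have hms : ∀ r, MeasurableSet ({ω | h₁ ω a = r + c} ∩ {ω | h₁ ω b = r}) :=
      fun r => (hmeas a (r + c)).inter (hmeas b r)
    rw [measure_iUnion hdisj hms]
    have hterm : ∀ r, μ ({ω | h₁ ω a = r + c} ∩ {ω | h₁ ω b = r})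
        = (1 / 2 ^ L) * μ {ω | h₁ ω b = r} := by
      intro r
      have := hXY.measure_inter_preimage_eq_mul (s := {r + c}) (t := {r})
        MeasurableSpace.measurableSet_top MeasurableSpace.measurableSet_top
      simp only [Set.preimage, Set.mem_singleton_iff] at this
      rw [this, hunif a (r + c)]
    simp_rw [hterm]
    rw [ENNReal.tsum_mul_left]
    have hsum : ∑' r, μ {ω | h₁ ω b = r} = 1 := by
      have hdb : Pairwise (Function.onFun Disjoint fun r => {ω | h₁ ω b = r}) := by
        intro r s hrs
        rw [Function.onFun, Set.disjoint_left]
        intro ω h1 h2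
        exact hrs ((Set.mem_setOf_eq ▸ h1).symm.trans h2)
      rw [← measure_iUnion hdb (fun r => hmeas b r)]
      have : (⋃ r, {ω | h₁ ω b = r}) = Set.univ := by
        ext ω; simp
      rw [this, measure_univ]
    rw [hsum, mul_one]
  -- the two subevents
  set E0 := ⋃ r, {ω | h₁ ω a = r} ∩ {ω | h₁ ω b = r} with hE0
  set E1 := ⋃ r, {ω | h₁ ω a = r + g} ∩ {ω | h₁ ω b = r} with hE1
  have hE0m : μ E0 = 1 / 2 ^ L := by
    have := key 0
    simpa using this
  have hE1m : μ E1 = 1 / 2 ^ L := key g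
  have hE1meas : MeasurableSet E1 :=
    MeasurableSet.iUnion fun r => (hmeas a (r + g)).inter (hmeas b r)
  have hdisjE : Disjoint E0 E1 := by
    rw [Set.disjoint_left]
    rintro ω hω0 hω1
    obtain ⟨_, ⟨r, rfl⟩, hr1, hr2⟩ := hω0
    obtain ⟨_, ⟨s, rfl⟩, hs1, hs2⟩ := hω1
    simp only [Set.mem_setOf_eq] at hr1 hr2 hs1 hs2
    apply hgne
    have : r = s := hr2.symm.trans hs2
    subst this
    have := hr1.symm.trans hs1
    exact (left_eq_add.mp this)
  have hsub : E0 ∪ E1 ⊆ {ω |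
          h₁ ω a * x ^ 2 + h₁ ω a * x + h₁ ω b
            = h₁ ω a * x ^ 2 + h₁ ω b * x + h₁ ω a} := by
    rintro ω (hω | hω)
    · obtain ⟨_, ⟨r, rfl⟩, hr1, hr2⟩ := hω
      simp only [Set.mem_setOf_eq] at hr1 hr2 ⊢
      rw [hr1, hr2]
    · obtain ⟨_, ⟨r, rfl⟩, hr1, hr2⟩ := hω
      simp only [Set.mem_setOf_eq] at hr1 hr2 ⊢
      rw [hr1, hr2]
      linear_combination hgx
  have hle : (1 : ℝ≥0∞) / 2 ^ L + 1 / 2 ^ L ≤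
      μ {ω | h₁ ω a * x ^ 2 + h₁ ω a * x + h₁ ω b
            = h₁ ω a * x ^ 2 + h₁ ω b * x + h₁ ω a} := by
    have hu := measure_union (μ := μ) hdisjE hE1meas
    rw [hE0m, hE1m] at hu
    rw [← hu]
    exact measure_mono hsub
  have h2 : (2 : ℝ≥0∞) ≠ 0 := by norm_num
  have h2t : (2 : ℝ≥0∞) ≠ ⊤ := by norm_num
  have hpne : (2 : ℝ≥0∞) ^ (L - 1) ≠ 0 := pow_ne_zero _ h2
  have hpnt : (2 : ℝ≥0∞) ^ (L - 1) ≠ ⊤ := ENNReal.pow_ne_top h2t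
  have harith : (1 : ℝ≥0∞) / 2 ^ (L - 1) = 1 / 2 ^ L + 1 / 2 ^ L := by
    have hpow : (2 : ℝ≥0∞) ^ L = 2 ^ (L - 1) * 2 := by
      rw [← pow_succ]; congr 1; omega
    rw [hpow, ← two_mul]
    simp only [one_div]
    rw [ENNReal.mul_inv (Or.inl hpne) (Or.inl hpnt),
      mul_comm ((2 : ℝ≥0∞) ^ (L - 1))⁻¹ (2 : ℝ≥0∞)⁻¹, ← mul_assoc,
      ENNReal.mul_inv_cancel h2 h2t, one_mul]
  constructor
  · rw [harith]; exact hle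
  · rw [harith]
    refine ENNReal.lt_add_right ?_ ?_
    · rw [one_div]
      exact ENNReal.inv_ne_top.mpr (pow_ne_zero _ h2)
    · rw [one_div]
      exact ENNReal.inv_ne_zero.mpr (ENNReal.pow_ne_top h2t)
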